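/- Let Λ be a finite set and Q a symmetric positive definite |Λ|×|Λ| matrix whose diagonal entries equal 1. Then for every η ∈ ℝ^Λ and ε ≥ 0, the pinned Gaussian partition function Z_ε[η] = ∫ exp(-½ φᵀQφ + ηᵀφ) ∏ᵢ(dφᵢ + ε δ₀(dφᵢ)) satisfies Z_ε[η] ≤ (1 + ε/(2π)^{1/2})^{|Λ|} · Z_0[η]. -/

import Mathlib

open MeasureTheory Real Finset
open scoped ENNReal

noncomputable def Een {ι : Type*} [Fintype ι] (Q : Matrix ι ι ℝ) (η : ι → ℝ) (φ : ι → ℝ) : ℝ :=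
  -(1 / 2) * (∑ i, ∑ j, Q i j * φ i * φ j) + ∑ i, η i * φ i

theorem measurable_Een {ι : Type*} [Fintype ι] (Q : Matrix ι ι ℝ) (η : ι → ℝ) :
    Measurable (Een Q η) := by
  unfold Een
  refine Measurable.add (Measurable.const_mul ?_ _) ?_
  · exact Finset.measurable_sum _ fun i _ => Finset.measurable_sum _ fun j _ =>
      ((measurable_pi_apply i).const_mul _).mul (measurable_pi_apply j)
  · exact Finset.measurable_sum _ fun i _ => (measurable_pi_apply i).const_mul _

theorem Een_update {ι : Type*} [Fintype ι] [DecidableEq ι] (Q : Matrix ι ι ℝ)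
    (hsym : Q.IsSymm) (hdiag : ∀ i, Q i i = 1) (η : ι → ℝ) (φ : ι → ℝ) (i : ι) (t : ℝ) :
    Een Q η (Function.update φ i t)
      = Een Q η (Function.update φ i 0)
        + (η i - ∑ j ∈ univ.erase i, Q i j * φ j) * t - t ^ 2 / 2 := by
  have hq : ∀ s : ℝ, (∑ j, ∑ k, Q j k * Function.update φ i s j * Function.update φ i s k)
      = s ^ 2 + 2 * (∑ j ∈ univ.erase i, Q i j * φ j) * s
        + ∑ j ∈ univ.erase i, ∑ k ∈ univ.erase i, Q j k * φ j * φ k := by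
    intro s
    rw [← Finset.add_sum_erase _ _ (mem_univ i)]
    have hfirst : (∑ k, Q i k * Function.update φ i s i * Function.update φ i s k)
        = s * s + (∑ k ∈ univ.erase i, Q i k * φ k) * s := by
      rw [← Finset.add_sum_erase _ _ (mem_univ i)]
      have h1 : ∀ k ∈ univ.erase i,
          Q i k * Function.update φ i s i * Function.update φ i s k = Q i k * φ k * s := by
        intro k hk
        rw [Function.update_self, Function.update_of_ne (Finset.ne_of_mem_erase hk)]
        ring
      rw [Finset.sum_congr rfl h1, ← Finset.sum_mul]
      simp only [Function.update_self, hdiag i]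
      ring
    have hinner : ∀ j ∈ univ.erase i,
        (∑ k, Q j k * Function.update φ i s j * Function.update φ i s k)
          = Q i j * φ j * s + ∑ k ∈ univ.erase i, Q j k * φ j * φ k := by
      intro j hj
      have hji : j ≠ i := Finset.ne_of_mem_erase hj
      rw [← Finset.add_sum_erase _ _ (mem_univ i)]
      have h1 : ∀ k ∈ univ.erase i,
          Q j k * Function.update φ i s j * Function.update φ i s k = Q j k * φ j * φ k := by
        intro k hk
        rw [Function.update_of_ne hji, Function.update_of_ne (Finset.ne_of_mem_erase hk)]
      have hsymji : Q j i = Q i j := by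
        have h2 := hsym
        rw [Matrix.IsSymm] at h2
        calc Q j i = Q.transpose i j := rfl
          _ = Q i j := by rw [h2]
      rw [Finset.sum_congr rfl h1, Function.update_self, Function.update_of_ne hji, hsymji]
    rw [hfirst, Finset.sum_congr rfl hinner, Finset.sum_add_distrib, ← Finset.sum_mul]
    ring
  have hl : ∀ s : ℝ, (∑ j, η j * Function.update φ i s j)
      = η i * s + ∑ j ∈ univ.erase i, η j * φ j := by
    intro s
    rw [← Finset.add_sum_erase _ _ (mem_univ i), Function.update_self]
    congr 1
    exact Finset.sum_congr rfl fun j hj => by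
      rw [Function.update_of_ne (Finset.ne_of_mem_erase hj)]
  unfold Een
  rw [hq t, hq 0, hl t, hl 0]
  ring

theorem gauss_lint : ∫⁻ t : ℝ, ENNReal.ofReal (Real.exp (-((t : ℝ) ^ 2) / 2))
    = ENNReal.ofReal (Real.sqrt (2 * Real.pi)) := by
  have hint : MeasureTheory.Integrable (fun t : ℝ => Real.exp (-(t ^ 2) / 2)) := by
    have := integrable_exp_neg_mul_sq (by norm_num : (0:ℝ) < 1/2)
    convert this using 2 with t
    ring_nf
  rw [← ofReal_integral_eq_lintegral_ofReal hint
    (Filter.Eventually.of_forall fun t => (Real.exp_pos _).le)]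
  congr 1
  have h : ∀ t : ℝ, Real.exp (-(t ^ 2) / 2) = Real.exp (-(1/2 : ℝ) * t ^ 2) := by
    intro t; ring_nf
  rw [MeasureTheory.integral_congr_ae (Filter.Eventually.of_forall h)]
  rw [integral_gaussian (1/2 : ℝ)]
  norm_num
  ring

theorem gauss_lint_shift (c : ℝ) : ∫⁻ t : ℝ, ENNReal.ofReal (Real.exp (-((t - c) ^ 2) / 2))
    = ENNReal.ofReal (Real.sqrt (2 * Real.pi)) := by
  rw [← gauss_lint]
  exact lintegral_sub_right_eq_self (fun t : ℝ => ENNReal.ofReal (Real.exp (-(t ^ 2) / 2))) c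

theorem single_site {ι : Type*} [Fintype ι] [DecidableEq ι] (Q : Matrix ι ι ℝ)
    (hsym : Q.IsSymm) (hdiag : ∀ i, Q i i = 1) (η : ι → ℝ) (φ : ι → ℝ) (i : ι) :
    ENNReal.ofReal (Real.sqrt (2 * Real.pi))
        * ENNReal.ofReal (Real.exp (Een Q η (Function.update φ i 0)))
      ≤ ∫⁻ t : ℝ, ENNReal.ofReal (Real.exp (Een Q η (Function.update φ i t))) := by
  set c : ℝ := η i - ∑ j ∈ univ.erase i, Q i j * φ j with hc
  set b : ℝ := Een Q η (Function.update φ i 0) with hb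
  have hpt : ∀ t : ℝ, ENNReal.ofReal (Real.exp b * Real.exp (-((t - c) ^ 2) / 2))
      ≤ ENNReal.ofReal (Real.exp (Een Q η (Function.update φ i t))) := by
    intro t
    apply ENNReal.ofReal_le_ofReal
    rw [← Real.exp_add, Een_update Q hsym hdiag η φ i t, ← hc, ← hb]
    apply Real.exp_le_exp.2
    have hexp : (t - c) ^ 2 = t ^ 2 - 2 * c * t + c ^ 2 := by ring
    clear_value c b
    linarith [sq_nonneg c, hexp]
  calc ENNReal.ofReal (Real.sqrt (2 * Real.pi)) * ENNReal.ofReal (Real.exp b)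
      = ENNReal.ofReal (Real.exp b) * ∫⁻ t : ℝ, ENNReal.ofReal (Real.exp (-((t - c) ^ 2) / 2)) := by
        rw [gauss_lint_shift c, mul_comm]
    _ = ∫⁻ t : ℝ, ENNReal.ofReal (Real.exp b * Real.exp (-((t - c) ^ 2) / 2)) := by
        rw [← lintegral_const_mul' _ _ ENNReal.ofReal_ne_top]
        congr 1
        funext t
        rw [ENNReal.ofReal_mul (Real.exp_pos _).le]
    _ ≤ _ := lintegral_mono hpt

section main
variable {ι : Type*} [Fintype ι] [DecidableEq ι]

theorem main_lint (Q : Matrix ι ι ℝ) (hsym : Q.IsSymm) (hdiag : ∀ i, Q i i = 1)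
    (η : ι → ℝ) (ε : ℝ) (hε : 0 ≤ ε) :
    (∫⁻ φ : ι → ℝ, ENNReal.ofReal (Real.exp (Een Q η φ))
        ∂(Measure.pi fun _ : ι => (volume + ENNReal.ofReal ε • Measure.dirac 0)))
      ≤ (ENNReal.ofReal (1 + ε / Real.sqrt (2 * Real.pi))) ^ Fintype.card ι *
        ∫⁻ φ : ι → ℝ, ENNReal.ofReal (Real.exp (Een Q η φ)) := by
  set μ : Measure ℝ := volume + ENNReal.ofReal ε • Measure.dirac 0 with hμ
  haveI : IsFiniteMeasure (ENNReal.ofReal ε • (Measure.dirac (0:ℝ))) := by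
    constructor
    simp only [Measure.smul_apply, smul_eq_mul, Measure.dirac_apply' _ MeasurableSet.univ]
    exact ENNReal.mul_lt_top ENNReal.ofReal_lt_top (by simp)
  haveI : SigmaFinite μ := by rw [hμ]; infer_instance
  set f : (ι → ℝ) → ℝ≥0∞ := fun φ => ENNReal.ofReal (Real.exp (Een Q η φ)) with hf
  have hfm : Measurable f := ENNReal.measurable_ofReal.comp ((measurable_Een Q η).exp)
  set C : ℝ≥0∞ := ENNReal.ofReal (1 + ε / Real.sqrt (2 * Real.pi)) with hC
  have hs2pos : (0:ℝ) < Real.sqrt (2 * Real.pi) := Real.sqrt_pos.2 (mul_pos two_pos Real.pi_pos)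
  set s2 : ℝ≥0∞ := ENNReal.ofReal (Real.sqrt (2 * Real.pi)) with hs2
  have hs2ne : s2 ≠ 0 := by
    rw [hs2]; exact (ENNReal.ofReal_pos.2 hs2pos).ne'
  have hs2top : s2 ≠ ⊤ := ENNReal.ofReal_ne_top
  have hCeq : C = 1 + ENNReal.ofReal ε / s2 := by
    rw [hC, hs2, ENNReal.ofReal_add zero_le_one (div_nonneg hε (Real.sqrt_nonneg _)),
      ENNReal.ofReal_one, ENNReal.ofReal_div_of_pos hs2pos]
  have hCtop : C ≠ ⊤ := ENNReal.ofReal_ne_top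
  -- induction claim
  have key : ∀ s : Finset ι, ∀ x : ι → ℝ,
      (∫⋯∫⁻_s, f ∂(fun _ : ι => μ)) x ≤ C ^ s.card * (∫⋯∫⁻_s, f ∂(fun _ : ι => volume)) x := by
    intro s
    induction s using Finset.induction with
    | empty => intro x; simp
    | @insert i s hi ih =>
      intro x
      rw [lmarginal_insert _ hfm hi]
      have step1 : (∫⁻ t, (∫⋯∫⁻_s, f ∂(fun _ : ι => μ)) (Function.update x i t) ∂μ)
          ≤ C ^ s.card * ∫⁻ t, (∫⋯∫⁻_s, f ∂(fun _ : ι => volume)) (Function.update x i t) ∂μ := by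
        rw [← lintegral_const_mul' _ _ (ENNReal.pow_ne_top hCtop)]
        exact lintegral_mono fun t => ih (Function.update x i t)
      set Fv : (ι → ℝ) → ℝ≥0∞ := ∫⋯∫⁻_s, f ∂(fun _ : ι => volume) with hFv
      have hFvm : Measurable Fv := Measurable.lmarginal _ hfm
      have hFvum : Measurable fun t => Fv (Function.update x i t) :=
        hFvm.comp (measurable_update x)
      have hsplit : (∫⁻ t, Fv (Function.update x i t) ∂μ)
          = (∫⁻ t, Fv (Function.update x i t)) + ENNReal.ofReal ε * Fv (Function.update x i 0) := by
        rw [hμ, lintegral_add_measure, lintegral_smul_measure, lintegral_dirac' _ hFvum, smul_eq_mul]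
      have hkey : s2 * Fv (Function.update x i 0) ≤ ∫⁻ t, Fv (Function.update x i t) := by
        have h1 : Fv (Function.update x i 0)
            = (∫⋯∫⁻_s, (f ∘ fun ψ => Function.update ψ i 0) ∂(fun _ : ι => volume)) x :=
          lmarginal_update_of_notMem hfm hi x 0
        have h2 : s2 * Fv (Function.update x i 0)
            = (∫⋯∫⁻_s, (fun ψ => s2 * f (Function.update ψ i 0)) ∂(fun _ : ι => volume)) x := by
          rw [h1]
          simp only [MeasureTheory.lmarginal, Function.comp]
          rw [← lintegral_const_mul' _ _ hs2top]
        rw [h2]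
        have h3 : (fun ψ : ι → ℝ => s2 * f (Function.update ψ i 0))
            ≤ fun ψ => ∫⁻ t, f (Function.update ψ i t) := fun ψ =>
          single_site Q hsym hdiag η ψ i
        calc (∫⋯∫⁻_s, (fun ψ => s2 * f (Function.update ψ i 0)) ∂(fun _ : ι => volume)) x
            ≤ (∫⋯∫⁻_s, (fun ψ => ∫⁻ t, f (Function.update ψ i t)) ∂(fun _ : ι => volume)) x :=
              lmarginal_mono h3 x
          _ = (∫⋯∫⁻_insert i s, f ∂(fun _ : ι => volume)) x := by
              rw [lmarginal_insert' _ hfm hi]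
          _ = ∫⁻ t, Fv (Function.update x i t) := by
              rw [lmarginal_insert _ hfm hi]
      have hstep2 : (∫⁻ t, Fv (Function.update x i t) ∂μ)
          ≤ C * ∫⁻ t, Fv (Function.update x i t) := by
        rw [hsplit, hCeq, add_mul, one_mul]
        refine add_le_add le_rfl ?_
        have hG : Fv (Function.update x i 0) ≤ (∫⁻ t, Fv (Function.update x i t)) / s2 :=
          (ENNReal.le_div_iff_mul_le (Or.inl hs2ne) (Or.inl hs2top)).2
            (by rw [mul_comm]; exact hkey)
        calc ENNReal.ofReal ε * Fv (Function.update x i 0)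
            ≤ ENNReal.ofReal ε * ((∫⁻ t, Fv (Function.update x i t)) / s2) := by gcongr
          _ = ENNReal.ofReal ε / s2 * ∫⁻ t, Fv (Function.update x i t) := by
              rw [div_eq_mul_inv, div_eq_mul_inv]; ring
      calc (∫⁻ t, (∫⋯∫⁻_s, f ∂(fun _ : ι => μ)) (Function.update x i t) ∂μ)
          ≤ C ^ s.card * ∫⁻ t, Fv (Function.update x i t) ∂μ := step1
        _ ≤ C ^ s.card * (C * ∫⁻ t, Fv (Function.update x i t)) := by gcongr
        _ = C ^ (insert i s).card * (∫⋯∫⁻_insert i s, f ∂(fun _ : ι => volume)) x := by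
            rw [lmarginal_insert _ hfm hi, Finset.card_insert_of_notMem hi, pow_succ]
            ring
  rcases isEmpty_or_nonempty (ι → ℝ) with h | ⟨⟨x⟩⟩
  · simp [lintegral_of_isEmpty]
  calc (∫⁻ φ : ι → ℝ, f φ ∂(Measure.pi fun _ : ι => μ))
      = (∫⋯∫⁻_univ, f ∂(fun _ : ι => μ)) x := lintegral_eq_lmarginal_univ x
    _ ≤ C ^ (univ : Finset ι).card * (∫⋯∫⁻_univ, f ∂(fun _ : ι => volume)) x := key univ x
    _ = C ^ Fintype.card ι * ∫⁻ φ : ι → ℝ, f φ := by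
        rw [← lintegral_eq_lmarginal_univ x, Finset.card_univ, ← MeasureTheory.volume_pi]

theorem mono_lint (Q : Matrix ι ι ℝ) (η : ι → ℝ) (ε : ℝ) :
    (∫⁻ φ : ι → ℝ, ENNReal.ofReal (Real.exp (Een Q η φ)))
      ≤ ∫⁻ φ : ι → ℝ, ENNReal.ofReal (Real.exp (Een Q η φ))
          ∂(Measure.pi fun _ : ι => (volume + ENNReal.ofReal ε • Measure.dirac 0)) := by
  set μ : Measure ℝ := volume + ENNReal.ofReal ε • Measure.dirac 0 with hμ
  haveI : IsFiniteMeasure (ENNReal.ofReal ε • (Measure.dirac (0:ℝ))) := by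
    constructor
    simp only [Measure.smul_apply, smul_eq_mul, Measure.dirac_apply' _ MeasurableSet.univ]
    exact ENNReal.mul_lt_top ENNReal.ofReal_lt_top (by simp)
  haveI : SigmaFinite μ := by rw [hμ]; infer_instance
  set f : (ι → ℝ) → ℝ≥0∞ := fun φ => ENNReal.ofReal (Real.exp (Een Q η φ)) with hf
  have hfm : Measurable f := ENNReal.measurable_ofReal.comp ((measurable_Een Q η).exp)
  have key : ∀ s : Finset ι, ∀ x : ι → ℝ,
      (∫⋯∫⁻_s, f ∂(fun _ : ι => volume)) x ≤ (∫⋯∫⁻_s, f ∂(fun _ : ι => μ)) x := by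
    intro s
    induction s using Finset.induction with
    | empty => intro x; simp
    | @insert i s hi ih =>
      intro x
      rw [lmarginal_insert _ hfm hi, lmarginal_insert _ hfm hi]
      calc (∫⁻ t, (∫⋯∫⁻_s, f ∂(fun _ : ι => volume)) (Function.update x i t))
          ≤ ∫⁻ t, (∫⋯∫⁻_s, f ∂(fun _ : ι => μ)) (Function.update x i t) :=
            lintegral_mono fun t => ih (Function.update x i t)
        _ ≤ ∫⁻ t, (∫⋯∫⁻_s, f ∂(fun _ : ι => μ)) (Function.update x i t) ∂μ :=
            lintegral_mono' (Measure.le_add_right le_rfl) le_rfl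
  rcases isEmpty_or_nonempty (ι → ℝ) with h | ⟨⟨x⟩⟩
  · simp [lintegral_of_isEmpty]
  rw [MeasureTheory.volume_pi, lintegral_eq_lmarginal_univ (μ := fun _ : ι => μ) x,
    lintegral_eq_lmarginal_univ (μ := fun _ : ι => volume) x]
  exact key univ x

end main

/-- Pinned Gaussian partition function bound: `Z_ε[η] ≤ (1 + ε/√(2π))^{|Λ|} Z_0[η]`. -/
theorem pinned_gaussian_partition_le {ι : Type*} [Fintype ι]
    (Q : Matrix ι ι ℝ) (hsym : Q.IsSymm) (hpos : Q.PosDef)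
    (hdiag : ∀ i, Q i i = 1) (η : ι → ℝ) (ε : ℝ) (hε : 0 ≤ ε) :
    (∫ φ : ι → ℝ,
        Real.exp (-(1 / 2) * (∑ i, ∑ j, Q i j * φ i * φ j) + ∑ i, η i * φ i)
        ∂(Measure.pi fun _ : ι => (volume + ENNReal.ofReal ε • Measure.dirac 0)))
      ≤ (1 + ε / Real.sqrt (2 * Real.pi)) ^ Fintype.card ι *
        ∫ φ : ι → ℝ,
          Real.exp (-(1 / 2) * (∑ i, ∑ j, Q i j * φ i * φ j) + ∑ i, η i * φ i) := by
  classical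
  set μ : Measure ℝ := volume + ENNReal.ofReal ε • Measure.dirac 0 with hμ
  have hFm : Measurable fun φ : ι → ℝ => Real.exp (Een Q η φ) := (measurable_Een Q η).exp
  have hnn : ∀ φ : ι → ℝ, (0:ℝ) ≤ Real.exp (Een Q η φ) := fun φ => (Real.exp_pos _).le
  have hEq : ∀ φ : ι → ℝ,
      Real.exp (-(1 / 2) * (∑ i, ∑ j, Q i j * φ i * φ j) + ∑ i, η i * φ i)
        = Real.exp (Een Q η φ) := fun φ => rfl
  simp only [hEq]
  rw [integral_eq_lintegral_of_nonneg_ae (Filter.Eventually.of_forall hnn)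
      hFm.aestronglyMeasurable,
    integral_eq_lintegral_of_nonneg_ae (Filter.Eventually.of_forall hnn)
      hFm.aestronglyMeasurable]
  set Lμ : ℝ≥0∞ := ∫⁻ φ : ι → ℝ, ENNReal.ofReal (Real.exp (Een Q η φ))
      ∂(Measure.pi fun _ : ι => μ) with hLμ
  set Lv : ℝ≥0∞ := ∫⁻ φ : ι → ℝ, ENNReal.ofReal (Real.exp (Een Q η φ)) with hLv
  have h1 : Lμ ≤ (ENNReal.ofReal (1 + ε / Real.sqrt (2 * Real.pi))) ^ Fintype.card ι * Lv :=
    main_lint Q hsym hdiag η ε hε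
  have h2 : Lv ≤ Lμ := mono_lint Q η ε
  have hCnn : (0:ℝ) ≤ 1 + ε / Real.sqrt (2 * Real.pi) :=
    add_nonneg zero_le_one (div_nonneg hε (Real.sqrt_nonneg _))
  by_cases hv : Lv = ⊤
  · have hμt : Lμ = ⊤ := top_le_iff.1 (hv ▸ h2)
    rw [hμt, hv]
    simp
  · have hμtop : Lμ ≠ ⊤ := by
      intro h
      apply hv
      have htop : (ENNReal.ofReal (1 + ε / Real.sqrt (2 * Real.pi))) ^ Fintype.card ι * Lv = ⊤ :=
        top_le_iff.1 (h ▸ h1)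
      rcases ENNReal.mul_eq_top.1 htop with ⟨_, h'⟩ | ⟨h', _⟩
      · exact h'
      · exact absurd h' (ENNReal.pow_ne_top ENNReal.ofReal_ne_top)
    calc Lμ.toReal ≤ ((ENNReal.ofReal (1 + ε / Real.sqrt (2 * Real.pi))) ^ Fintype.card ι
          * Lv).toReal := by
          apply ENNReal.toReal_mono _ h1
          exact ENNReal.mul_ne_top (ENNReal.pow_ne_top ENNReal.ofReal_ne_top) hv
      _ = (1 + ε / Real.sqrt (2 * Real.pi)) ^ Fintype.card ι * Lv.toReal := by
          rw [ENNReal.toReal_mul, ENNReal.toReal_pow, ENNReal.toReal_ofReal hCnn]
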